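/- Let h : C → K be a homeomorphism with h(d) = σ(d) for all d ∈ D and h[V_d] = K ∩ W(d) for all d ∈ D, and let f be Kuratowski's function. Suppose g : K⁺ → ℝ satisfies g(z) = f(h⁻¹(z)) for all z ∈ K and g(z) = f(d) for all z ∈ F(d) and all d ∈ D. Then g is continuous at every point of K⁺ \ σ[D]; in particular g is continuous at all points of K \ σ[D] and locally constant on K⁺ \ K. -/

import Mathlib

open Set Topology

/-- The Cantor space `2^ℕ`, with coordinates indexed by the positive integers. -/
abbrev Cant : Type := ℕ+ → Bool

/-- The support of a point of the Cantor space, as a set of (positive) natural numbers. -/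
def ksupp (x : Cant) : Set ℕ := {i | ∃ h : 0 < i, x ⟨i, h⟩ = true}

/-- The plane. -/
abbrev Plane : Type := EuclideanSpace ℝ (Fin 2)

/-- `N_d = max supp d` (with `sSup ∅ = 0` for the zero point). -/
noncomputable def Nd (d : Cant) : ℕ := sSup (ksupp d)

/-- The basic clopen set `V_d = {y : y(i) = d(i) for 1 ≤ i ≤ N_d}`. -/
noncomputable def Vd (d : Cant) : Set Cant :=
  {y | ∀ i : ℕ+, (i : ℕ) ≤ Nd d → y i = d i}

/-- The set `D_d` of children of `d ∈ D`: the points of `D_{k_d+1}` agreeing with `d`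
on the coordinates `1, …, N_d`. -/
noncomputable def Dch (d : Cant) : Set Cant :=
  {e | (ksupp e).Finite ∧ (ksupp e).ncard = (ksupp d).ncard + 1 ∧
    ∀ i : ℕ+, (i : ℕ) ≤ Nd d → e i = d i}

/-- The ball `W(d) = B(σ(d), 2^{−ℓ(d)})`. -/
noncomputable def Wb (σ : Cant → Plane) (ℓ : Cant → ℕ) (d : Cant) : Set Plane :=
  Metric.ball (σ d) ((2 : ℝ) ^ (-(ℓ d : ℤ)))

/-- The ball `U(d) = B(σ(d), 2^{−ℓ(d)−1})`. -/
noncomputable def Ub (σ : Cant → Plane) (ℓ : Cant → ℕ) (d : Cant) : Set Plane :=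
  Metric.ball (σ d) ((2 : ℝ) ^ (-(ℓ d : ℤ) - 1))

/-- The resulting Cantor set `K = ⋂_n cl (⋃ {W(d) : d ∈ D_n})`. -/
noncomputable def Kset (σ : Cant → Plane) (ℓ : Cant → ℕ) : Set Plane :=
  ⋂ n : ℕ, closure (⋃ d ∈ {d : Cant | (ksupp d).Finite ∧ (ksupp d).ncard = n}, Wb σ ℓ d)

/-- The closed set `F(d) = cl U(d) \ ⋃_{e ∈ D_d} W(e)`. -/
noncomputable def Fd (σ : Cant → Plane) (ℓ : Cant → ℕ) (d : Cant) : Set Plane :=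
  closure (Ub σ ℓ d) \ ⋃ e ∈ Dch d, Wb σ ℓ e

/-- The three conditions imposed on the maps `σ : D → ℝ²` and `ℓ : D → ω`:
(1) `⟨σ(e) : e ∈ D_d⟩` converges to `σ(d)` (in the sense that `σ(e)` is close to `σ(d)`
    once the added support element `N_e` of the child `e` is large);
(2) `cl W(e) ⊆ U(d) \ {σ(d)}` whenever `e ∈ D_d`;
(3) `{cl W(d) : d ∈ D_n}` is pairwise disjoint for every `n`. -/
def CantorConds (σ : Cant → Plane) (ℓ : Cant → ℕ) : Prop :=
  (∀ d : Cant, (ksupp d).Finite → ∀ ε > (0 : ℝ), ∃ M : ℕ, ∀ e ∈ Dch d,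
      M ≤ Nd e → dist (σ e) (σ d) < ε) ∧
  (∀ d : Cant, (ksupp d).Finite → ∀ e ∈ Dch d,
      closure (Wb σ ℓ e) ⊆ Ub σ ℓ d \ {σ d}) ∧
  (∀ n : ℕ, ∀ d e : Cant, (ksupp d).Finite → (ksupp d).ncard = n →
      (ksupp e).Finite → (ksupp e).ncard = n → d ≠ e →
      Disjoint (closure (Wb σ ℓ d)) (closure (Wb σ ℓ e)))

open scoped Classical in
/-- Kuratowski's function `f(x) = Σ_j (−1)^{c_x(j)} 2^{−j}`, where `c_x` enumerates the
support of `x` in increasing order; here the summation index `j : ℕ` is the 0-based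
version of the paper's 1-based position index, so the weight is `2^{−(j+1)}`. -/
noncomputable def kf (x : Cant) : ℝ :=
  ∑' j : ℕ, if (ksupp x).Infinite ∨ j < (ksupp x).ncard then
    (-1 : ℝ) ^ (Nat.nth (· ∈ ksupp x) j) * (2 : ℝ) ^ (-(j + 1 : ℤ)) else 0

/-- The set `K⁺ = K ∪ ⋃_{d ∈ D} F(d)`. -/
noncomputable def Kplus (σ : Cant → Plane) (ℓ : Cant → ℕ) : Set Plane :=
  Kset σ ℓ ∪ ⋃ d ∈ {d : Cant | (ksupp d).Finite}, Fd σ ℓ d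

/-! ### Auxiliary lemmas -/

section Aux

open scoped Classical

lemma mem_ksupp {x : Cant} {i : ℕ+} : (i:ℕ) ∈ ksupp x ↔ x i = true := by
  constructor
  · rintro ⟨h, hx⟩
    exact hx
  · intro hx
    exact ⟨i.2, hx⟩

lemma ksupp_pos {x : Cant} {i : ℕ} (h : i ∈ ksupp x) : 0 < i := h.1

lemma cant_ext {x y : Cant} (h : ksupp x = ksupp y) : x = y := by
  funext i
  have := h ▸ (mem_ksupp (x := x) (i := i))
  have h2 := mem_ksupp (x := y) (i := i)
  rw [h2] at this
  cases hx : x i <;> cases hy : y i <;> simp [hx, hy] at this ⊢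

lemma le_Nd {d : Cant} (hd : (ksupp d).Finite) {i : ℕ} (hi : i ∈ ksupp d) : i ≤ Nd d :=
  le_csSup hd.bddAbove hi

lemma Nd_mem {d : Cant} (hd : (ksupp d).Finite) (hne : (ksupp d).Nonempty) :
    Nd d ∈ ksupp d := Nat.sSup_mem hne hd.bddAbove

/-- Drop the largest support element. -/
noncomputable def dropC (e : Cant) : Cant := fun i => if (i:ℕ) = Nd e then false else e i

lemma ksupp_dropC (e : Cant) : ksupp (dropC e) = ksupp e \ {Nd e} := by
  ext i
  rcases Nat.eq_zero_or_pos i with h0 | h0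
  · subst h0
    simp only [Set.mem_diff, Set.mem_singleton_iff]
    constructor
    · intro h; exact absurd (ksupp_pos h) (by omega)
    · rintro ⟨h, -⟩; exact absurd (ksupp_pos h) (by omega)
  · lift i to ℕ+ using h0
    simp only [Set.mem_diff, Set.mem_singleton_iff, mem_ksupp]
    unfold dropC
    by_cases hi : (i:ℕ) = Nd e <;> simp [hi]

lemma dropC_finite {e : Cant} (he : (ksupp e).Finite) : (ksupp (dropC e)).Finite := by
  rw [ksupp_dropC]; exact he.subset (Set.diff_subset)

lemma mem_Dch_dropC {e : Cant} (he : (ksupp e).Finite) (hne : (ksupp e).Nonempty) :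
    e ∈ Dch (dropC e) := by
  have hNe : Nd e ∈ ksupp e := Nd_mem he hne
  have hks := ksupp_dropC e
  have hNlt : Nd (dropC e) < Nd e := by
    have hpos := ksupp_pos hNe
    rcases (ksupp (dropC e)).eq_empty_or_nonempty with h | h
    · have : Nd (dropC e) = 0 := by unfold Nd; rw [h]; simp
      omega
    · have hm := Nd_mem (dropC_finite he) h
      rw [hks] at hm
      have := le_Nd he hm.1
      have := hm.2
      simp only [Set.mem_singleton_iff] at this
      omega
  refine ⟨he, ?_, ?_⟩
  · rw [hks, Set.ncard_diff_singleton_add_one hNe he]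
  · intro i hi
    unfold dropC
    rw [if_neg (by omega)]

lemma child_agree_mem {d e : Cant} (he : e ∈ Dch d) {i : ℕ} (hi : i ≤ Nd d) :
    (i ∈ ksupp e ↔ i ∈ ksupp d) := by
  rcases Nat.eq_zero_or_pos i with h0 | h0
  · subst h0
    constructor <;> intro h <;> exact absurd (ksupp_pos h) (by omega)
  · lift i to ℕ+ using h0
    rw [mem_ksupp, mem_ksupp, he.2.2 i hi]

lemma child_supset {d e : Cant} (hd : (ksupp d).Finite) (he : e ∈ Dch d) :
    ksupp d ⊆ ksupp e := fun i hi => (child_agree_mem he (le_Nd hd hi)).mpr hi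

lemma child_ksupp {d e : Cant} (hd : (ksupp d).Finite) (he : e ∈ Dch d) :
    ksupp e = insert (Nd e) (ksupp d) ∧ Nd d < Nd e := by
  have hsub := child_supset hd he
  obtain ⟨p, hpe, hpd⟩ : ∃ p, p ∈ ksupp e ∧ p ∉ ksupp d := by
    by_contra h
    push_neg at h
    have : ksupp e ⊆ ksupp d := h
    have := Set.ncard_le_ncard this hd
    have h21 := he.2.1
    omega
  have hpN : Nd d < p := by
    by_contra h
    exact hpd ((child_agree_mem he (by omega)).mp hpe)
  have hins : insert p (ksupp d) ⊆ ksupp e := Set.insert_subset hpe hsub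
  have hcard : (ksupp e).ncard ≤ (insert p (ksupp d)).ncard := by
    rw [Set.ncard_insert_of_notMem hpd hd, he.2.1]
  have heq : insert p (ksupp d) = ksupp e := Set.eq_of_subset_of_ncard_le hins hcard he.1
  have hple : ∀ x ∈ ksupp e, x ≤ p := by
    intro x hx
    rw [← heq] at hx
    rcases hx with h | h
    · omega
    · exact le_of_lt (lt_of_le_of_lt (le_Nd hd h) hpN)
  have hNp : Nd e = p := le_antisymm (csSup_le ⟨p, hpe⟩ hple) (le_Nd he.1 hpe)
  rw [hNp, heq.symm] at *
  exact ⟨rfl, by omega⟩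

lemma child_Nd_lt {d e : Cant} (hd : (ksupp d).Finite) (he : e ∈ Dch d) : Nd d < Nd e :=
  (child_ksupp hd he).2

lemma child_inj {d e e' : Cant} (hd : (ksupp d).Finite) (he : e ∈ Dch d) (he' : e' ∈ Dch d)
    (hN : Nd e = Nd e') : e = e' := by
  apply cant_ext
  rw [(child_ksupp hd he).1, (child_ksupp hd he').1, hN]

lemma children_small_finite {d : Cant} (hd : (ksupp d).Finite) (M : ℕ) :
    {e | e ∈ Dch d ∧ Nd e < M}.Finite := by
  apply Set.Finite.of_finite_image (f := Nd)
  · exact (Set.finite_Iio M).subset (by rintro x ⟨e, ⟨-, he⟩, rfl⟩; exact he)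
  · rintro e ⟨he, -⟩ e' ⟨he', -⟩ h
    exact child_inj hd he he' h


/-- Iterated ancestor. -/
noncomputable def ancC (e : Cant) (k : ℕ) : Cant := dropC^[k] e

lemma ancC_zero (e : Cant) : ancC e 0 = e := rfl

lemma ancC_succ (e : Cant) (k : ℕ) : ancC e (k+1) = dropC (ancC e k) :=
  Function.iterate_succ_apply' dropC k e

lemma ancC_card {e : Cant} (he : (ksupp e).Finite) :
    ∀ k, k ≤ (ksupp e).ncard →
      (ksupp (ancC e k)).Finite ∧ (ksupp (ancC e k)).ncard = (ksupp e).ncard - k := by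
  intro k
  induction k with
  | zero => intro _; rw [ancC_zero]; exact ⟨he, by simp⟩
  | succ k ih =>
    intro hk
    obtain ⟨hf, hc⟩ := ih (by omega)
    have hne : (ksupp (ancC e k)).Nonempty := by
      rw [Set.nonempty_iff_ne_empty]
      intro h
      rw [h] at hc
      simp at hc
      omega
    have hch := mem_Dch_dropC hf hne
    have := hch.2.1
    rw [ancC_succ]
    exact ⟨dropC_finite hf, by omega⟩

lemma ancC_child {e : Cant} (he : (ksupp e).Finite) {k : ℕ} (hk : k + 1 ≤ (ksupp e).ncard) :
    ancC e k ∈ Dch (ancC e (k+1)) := by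
  obtain ⟨hf, hc⟩ := ancC_card he k (by omega)
  have hne : (ksupp (ancC e k)).Nonempty := by
    rw [Set.nonempty_iff_ne_empty]
    intro h
    rw [h] at hc
    simp at hc
    omega
  rw [ancC_succ]
  exact mem_Dch_dropC hf hne

lemma mem_Vd_self (d : Cant) : d ∈ Vd d := fun _ _ => rfl

lemma Vd_trans {d e y : Cant} (hd : (ksupp d).Finite) (he : e ∈ Dch d) (hy : y ∈ Vd e) :
    y ∈ Vd d := fun i hi => by
  rw [hy i (le_of_lt (lt_of_le_of_lt hi (child_Nd_lt hd he))), he.2.2 i hi]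

lemma ancC_mem_Vd {e : Cant} (he : (ksupp e).Finite) :
    ∀ k, k ≤ (ksupp e).ncard → e ∈ Vd (ancC e k) := by
  intro k
  induction k with
  | zero => intro _; exact mem_Vd_self e
  | succ k ih =>
    intro hk
    exact Vd_trans (ancC_card he (k+1) hk).1 (ancC_child he hk) (ih (by omega))

section Metric

variable {σ : Cant → Plane} {ℓ : Cant → ℕ}

lemma Ub_subset_Wb (d : Cant) : Ub σ ℓ d ⊆ Wb σ ℓ d :=
  Metric.ball_subset_ball (zpow_le_zpow_right₀ one_le_two (by omega))

lemma clUb_subset_Wb (d : Cant) : closure (Ub σ ℓ d) ⊆ Wb σ ℓ d :=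
  (Metric.closure_ball_subset_closedBall).trans
    (Metric.closedBall_subset_ball (zpow_lt_zpow_right₀ one_lt_two (by omega)))

lemma Fd_subset_clUb (d : Cant) : Fd σ ℓ d ⊆ closure (Ub σ ℓ d) := Set.diff_subset

lemma clWb_subset_Ub_anc (hc : CantorConds σ ℓ) {e : Cant} (he : (ksupp e).Finite) :
    ∀ k, k + 1 ≤ (ksupp e).ncard →
      closure (Wb σ ℓ e) ⊆ Ub σ ℓ (ancC e (k+1)) := by
  intro k
  induction k with
  | zero =>
    intro hk
    have h1 := hc.2.1 (ancC e 1) (ancC_card he 1 hk).1 e (ancC_child he hk)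
    exact h1.trans Set.diff_subset
  | succ k ih =>
    intro hk
    have h1 := ih (by omega)
    have h2 := hc.2.1 (ancC e (k+2)) (ancC_card he (k+2) hk).1 (ancC e (k+1))
      (ancC_child he (by omega))
    refine h1.trans ?_
    exact (Ub_subset_Wb _).trans (subset_closure.trans (h2.trans Set.diff_subset))

lemma disj_clWb (hc : CantorConds σ ℓ) {d e : Cant} (hd : (ksupp d).Finite)
    (he : (ksupp e).Finite) {k : ℕ} (hcard : (ksupp e).ncard = (ksupp d).ncard + k)
    (hne : ancC e k ≠ d) : Disjoint (closure (Wb σ ℓ d)) (closure (Wb σ ℓ e)) := by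
  rcases Nat.eq_zero_or_pos k with rfl | hk
  · exact hc.2.2 (ksupp d).ncard d e hd rfl he (by omega) (fun h => hne ((ancC_zero e).trans h.symm))
  · obtain ⟨hf, hcn⟩ := ancC_card he k (by omega)
    have hsub : closure (Wb σ ℓ e) ⊆ closure (Wb σ ℓ (ancC e k)) := by
      obtain ⟨k', rfl⟩ : ∃ k', k = k' + 1 := ⟨k - 1, by omega⟩
      exact (clWb_subset_Ub_anc hc he k' (by omega)).trans
        ((Ub_subset_Wb _).trans subset_closure)
    exact (hc.2.2 (ksupp d).ncard d (ancC e k) hd rfl hf (by omega) (fun h => hne h.symm)).mono_right hsub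


lemma isClosed_Kset : IsClosed (Kset σ ℓ) :=
  isClosed_iInter (fun _ => isClosed_closure)

lemma Kset_inter_Wb_subset (hc : CantorConds σ ℓ) {d : Cant} (hd : (ksupp d).Finite) :
    Kset σ ℓ ∩ Wb σ ℓ d ⊆ closure (⋃ e ∈ Dch d, Wb σ ℓ e) := by
  rintro z ⟨hzK, hzW⟩
  have hz1 : z ∈ closure (⋃ e ∈ {e : Cant | (ksupp e).Finite ∧
      (ksupp e).ncard = (ksupp d).ncard + 1}, Wb σ ℓ e) :=
    Set.mem_iInter.mp hzK ((ksupp d).ncard + 1)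
  set A := ⋃ e ∈ Dch d, Wb σ ℓ e with hA
  set B := ⋃ e ∈ {e : Cant | ((ksupp e).Finite ∧ (ksupp e).ncard = (ksupp d).ncard + 1)
      ∧ e ∉ Dch d}, Wb σ ℓ e with hB
  have hsub : (⋃ e ∈ {e : Cant | (ksupp e).Finite ∧
      (ksupp e).ncard = (ksupp d).ncard + 1}, Wb σ ℓ e) ⊆ A ∪ B := by
    intro w hw
    simp only [Set.mem_iUnion, Set.mem_setOf_eq, exists_prop] at hw
    obtain ⟨e, he, hw⟩ := hw
    by_cases hch : e ∈ Dch d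
    · exact Or.inl (Set.mem_biUnion hch hw)
    · exact Or.inr (Set.mem_biUnion (Set.mem_setOf_eq ▸ ⟨he, hch⟩) hw)
  have hdisj : Disjoint (Wb σ ℓ d) B := by
    rw [hB, Set.disjoint_iUnion₂_right]
    rintro e ⟨⟨hef, hec⟩, hech⟩
    have hne : ancC e 1 ≠ d := by
      intro hh
      apply hech
      have := mem_Dch_dropC hef (Set.nonempty_of_ncard_ne_zero (by omega))
      rwa [show dropC e = ancC e 1 from rfl, hh] at this
    have hdis := disj_clWb hc hd hef (k := 1) (by omega) hne
    exact hdis.mono subset_closure subset_closure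
  have hzB : z ∉ closure B := fun hzb =>
    Set.disjoint_left.mp (hdisj.closure_right Metric.isOpen_ball) hzW hzb
  have hcl : closure (⋃ e ∈ {e : Cant | (ksupp e).Finite ∧
      (ksupp e).ncard = (ksupp d).ncard + 1}, Wb σ ℓ e) ⊆ closure A ∪ closure B := by
    rw [← closure_union]
    exact closure_mono hsub
  rcases hcl hz1 with hh | hh
  · exact hh
  · exact absurd hh hzB

lemma Kset_inter_Wb_subset_clUb (hc : CantorConds σ ℓ) {d : Cant} (hd : (ksupp d).Finite) :
    Kset σ ℓ ∩ Wb σ ℓ d ⊆ closure (Ub σ ℓ d) := by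
  refine (Kset_inter_Wb_subset hc hd).trans (closure_mono ?_)
  refine Set.iUnion₂_subset fun e he => ?_
  exact subset_closure.trans ((hc.2.1 d hd e he).trans Set.diff_subset)

lemma Fd_cases (hc : CantorConds σ ℓ) {d d' : Cant} (hd : (ksupp d).Finite)
    (hd' : (ksupp d').Finite) (hw : (Fd σ ℓ d' ∩ Wb σ ℓ d).Nonempty) :
    d' = d ∨ (d' ∈ Vd d ∧ (ksupp d).ncard < (ksupp d').ncard ∧
      ∃ c ∈ Dch d, Fd σ ℓ d' ⊆ closure (Ub σ ℓ c)) := by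
  obtain ⟨w, hwF, hwW⟩ := hw
  have hwclW' : w ∈ closure (Wb σ ℓ d') :=
    subset_closure (clUb_subset_Wb d' (Fd_subset_clUb d' hwF))
  have hwclWd : w ∈ closure (Wb σ ℓ d) := subset_closure hwW
  rcases lt_trichotomy (ksupp d').ncard (ksupp d).ncard with hlt | heq | hgt
  · exfalso
    set k := (ksupp d).ncard - (ksupp d').ncard with hk
    by_cases hanc : ancC d k = d'
    · have hc1 : ancC d (k-1) ∈ Dch d' := by
        have := ancC_child hd (k := k-1) (by omega)
        rwa [show k-1+1 = k from by omega, hanc] at this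
      have hWdc : Wb σ ℓ d ⊆ Wb σ ℓ (ancC d (k-1)) := by
        rcases Nat.eq_zero_or_pos (k-1) with h0 | h0
        · rw [h0, ancC_zero]
        · obtain ⟨j, hj⟩ : ∃ j, k - 1 = j + 1 := ⟨k-2, by omega⟩
          rw [hj]
          exact subset_closure.trans
            ((clWb_subset_Ub_anc hc hd j (by omega)).trans (Ub_subset_Wb _))
      exact hwF.2 (Set.mem_biUnion hc1 (hWdc hwW))
    · have hdis := disj_clWb hc hd' hd (k := k) (by omega) hanc
      exact Set.disjoint_left.mp hdis hwclW' hwclWd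
  · rcases eq_or_ne d' d with rfl | hne
    · exact Or.inl rfl
    · exfalso
      have hdis := hc.2.2 (ksupp d).ncard d d' hd rfl hd' heq (Ne.symm hne)
      exact Set.disjoint_left.mp hdis hwclWd hwclW'
  · right
    set k := (ksupp d').ncard - (ksupp d).ncard with hk
    by_cases hanc : ancC d' k = d
    · refine ⟨?_, by omega, ancC d' (k-1), ?_, ?_⟩
      · have := ancC_mem_Vd hd' k (by omega)
        rwa [hanc] at this
      · have := ancC_child hd' (k := k-1) (by omega)
        rwa [show k-1+1 = k from by omega, hanc] at this
      · rcases Nat.eq_zero_or_pos (k-1) with h0 | h0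
        · rw [h0, ancC_zero]
          exact Fd_subset_clUb d'
        · obtain ⟨j, hj⟩ : ∃ j, k - 1 = j + 1 := ⟨k-2, by omega⟩
          rw [hj]
          exact (Fd_subset_clUb d').trans ((clUb_subset_Wb d').trans
            (subset_closure.trans ((clWb_subset_Ub_anc hc hd' j (by omega)).trans
              subset_closure)))
    · exfalso
      have hdis := disj_clWb hc hd hd' (k := k) (by omega) hanc
      exact Set.disjoint_left.mp hdis hwclWd hwclW'

lemma dist_sigma_child (hc : CantorConds σ ℓ) {d e : Cant} (hd : (ksupp d).Finite)
    (he : e ∈ Dch d) : (2:ℝ) ^ (-(ℓ e : ℤ)) < dist (σ e) (σ d) := by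
  have h2 := hc.2.1 d hd e he
  have hnm : σ d ∉ closure (Wb σ ℓ e) := fun hmem => (h2 hmem).2 rfl
  rw [Wb, closure_ball _ (ne_of_gt (by positivity))] at hnm
  rw [Metric.mem_closedBall] at hnm
  rw [dist_comm]
  linarith [not_le.mp hnm]


lemma zpow_half_add (n : ℕ) :
    (2:ℝ) ^ (-(n:ℤ)-1) + (2:ℝ) ^ (-(n:ℤ)-1) = (2:ℝ) ^ (-(n:ℤ)) := by
  have h := zpow_add_one₀ (two_ne_zero (α := ℝ)) (-(n:ℤ)-1)
  rw [show -(n:ℤ)-1+1 = -(n:ℤ) from by ring] at h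
  rw [h]
  ring

lemma g_locally_const (hc : CantorConds σ ℓ) (h : Cant ≃ₜ (Kset σ ℓ))
    (hσ : ∀ d : Cant, (ksupp d).Finite → (h d : Plane) = σ d)
    (g : Plane → ℝ)
    (hgF : ∀ d : Cant, (ksupp d).Finite → ∀ z ∈ Fd σ ℓ d, g z = kf d) :
    ∀ z ∈ Kplus σ ℓ \ Kset σ ℓ, ∃ ε > (0 : ℝ),
      ∀ w ∈ Kplus σ ℓ, dist w z < ε → g w = g z := by
  rintro z ⟨hzP, hzK⟩
  obtain ⟨d, hd, hzF⟩ : ∃ d, (ksupp d).Finite ∧ z ∈ Fd σ ℓ d := by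
    rcases hzP with hK | hF
    · exact absurd hK hzK
    · simpa using hF
  obtain ⟨ε1, hε1, hball1⟩ := Metric.isOpen_iff.mp isClosed_Kset.isOpen_compl z hzK
  have hσdK : σ d ∈ Kset σ ℓ := by rw [← hσ d hd]; exact (h d).2
  have hzσ : z ≠ σ d := fun hzs => hzK (hzs ▸ hσdK)
  set δ0 := dist z (σ d) with hδ0
  have hδ0pos : 0 < δ0 := dist_pos.mpr hzσ
  obtain ⟨M, hM⟩ := hc.1 d hd (δ0/8) (by linarith)
  set Sm := {e | e ∈ Dch d ∧ Nd e < M} with hSm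
  have hSmfin := children_small_finite hd M
  obtain ⟨ε2, hε2, hε2min⟩ : ∃ ε2 > (0:ℝ), ∀ e ∈ Sm, ε2 ≤ (2:ℝ) ^ (-(ℓ e : ℤ) - 1) := by
    rcases Sm.eq_empty_or_nonempty with hem | hne
    · refine ⟨1, one_pos, ?_⟩
      rw [hem]
      rintro e ⟨⟩
    · obtain ⟨b, hb, hbmin⟩ :=
        Set.exists_min_image Sm (fun e => (2:ℝ) ^ (-(ℓ e : ℤ) - 1)) hSmfin hne
      exact ⟨_, by positivity, hbmin⟩
  have hεpos : (0:ℝ) < min (min ε1 ε2) (min (δ0/2) ((2:ℝ) ^ (-(ℓ d : ℤ) - 1))) := by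
    refine lt_min (lt_min hε1 hε2) (lt_min (by linarith) (by positivity))
  refine ⟨min (min ε1 ε2) (min (δ0/2) ((2:ℝ) ^ (-(ℓ d : ℤ) - 1))), hεpos, ?_⟩
  intro w hwP hwz
  have hgz : g z = kf d := hgF d hd z hzF
  have hwK : w ∉ Kset σ ℓ := by
    apply hball1
    rw [Metric.mem_ball]
    exact lt_of_lt_of_le hwz (le_trans (min_le_left _ _) (min_le_left _ _))
  obtain ⟨d', hd', hwF⟩ : ∃ d', (ksupp d').Finite ∧ w ∈ Fd σ ℓ d' := by
    rcases hwP with hK | hF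
    · exact absurd hK hwK
    · simpa using hF
  have hzU : dist z (σ d) ≤ (2:ℝ) ^ (-(ℓ d : ℤ) - 1) :=
    Metric.mem_closedBall.mp (Metric.closure_ball_subset_closedBall (Fd_subset_clUb d hzF))
  have hwWd : w ∈ Wb σ ℓ d := by
    rw [Wb, Metric.mem_ball]
    have h1 : dist w z < (2:ℝ) ^ (-(ℓ d : ℤ) - 1) :=
      lt_of_lt_of_le hwz (le_trans (min_le_right _ _) (min_le_right _ _))
    calc dist w (σ d) ≤ dist w z + dist z (σ d) := dist_triangle _ _ _
    _ < (2:ℝ) ^ (-(ℓ d : ℤ) - 1) + (2:ℝ) ^ (-(ℓ d : ℤ) - 1) := by linarith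
    _ = _ := zpow_half_add _
  rcases Fd_cases hc hd hd' ⟨w, hwF, hwWd⟩ with rfl | ⟨hVd, hcard, c, hcch, hFsub⟩
  · rw [hgF d' hd' w hwF, hgz]
  · exfalso
    have hwc : w ∈ closure (Ub σ ℓ c) := hFsub hwF
    have hwcB : dist w (σ c) ≤ (2:ℝ) ^ (-(ℓ c : ℤ) - 1) :=
      Metric.mem_closedBall.mp (Metric.closure_ball_subset_closedBall hwc)
    have hzWc : z ∉ Wb σ ℓ c := fun hmem => hzF.2 (Set.mem_biUnion hcch hmem)
    have hzc : (2:ℝ) ^ (-(ℓ c : ℤ)) ≤ dist z (σ c) := by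
      rw [Wb, Metric.mem_ball, not_lt] at hzWc
      exact hzWc
    have hwz2 : dist z w < δ0 / 2 := by
      rw [dist_comm]
      exact lt_of_lt_of_le hwz (le_trans (min_le_right _ _) (min_le_left _ _))
    by_cases hcSm : c ∈ Sm
    · have hεc := hε2min c hcSm
      have h1 : dist w z < (2:ℝ) ^ (-(ℓ c : ℤ) - 1) :=
        lt_of_lt_of_le (lt_of_lt_of_le hwz (le_trans (min_le_left _ _) (min_le_right _ _))) hεc
      have h2 : dist z (σ c) ≤ dist z w + dist w (σ c) := dist_triangle _ _ _
      rw [dist_comm z w] at h2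
      have h3 := zpow_half_add (ℓ c)
      linarith
    · have hNc : M ≤ Nd c := by
        rw [hSm, Set.mem_setOf_eq] at hcSm
        push_neg at hcSm
        exact hcSm hcch
      have hσc : dist (σ c) (σ d) < δ0/8 := hM c hcch hNc
      have hrc : (2:ℝ) ^ (-(ℓ c : ℤ)) < δ0/8 := lt_trans (dist_sigma_child hc hd hcch) hσc
      have ht := dist_triangle4 z w (σ c) (σ d)
      have h2c : (2:ℝ) ^ (-(ℓ c : ℤ) - 1) ≤ (2:ℝ) ^ (-(ℓ c : ℤ)) :=
        zpow_le_zpow_right₀ one_le_two (by omega)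
      linarith

end Metric


section KF

/-- The `j`-th term of Kuratowski's function. -/
noncomputable def kfTerm (x : Cant) (j : ℕ) : ℝ :=
  if (ksupp x).Infinite ∨ j < (ksupp x).ncard then
    (-1 : ℝ) ^ (Nat.nth (· ∈ ksupp x) j) * (2 : ℝ) ^ (-(j + 1 : ℤ)) else 0

lemma kf_eq_tsum (x : Cant) : kf x = ∑' j, kfTerm x j := rfl

lemma two_zpow_eq (j : ℕ) : (2:ℝ) ^ (-(j + 1 : ℤ)) = (2⁻¹ : ℝ) ^ (j+1) := by
  rw [inv_pow, ← zpow_natCast (2:ℝ) (j+1), ← zpow_neg]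
  norm_num

lemma zpow_neg_natCast_eq (n : ℕ) : (2:ℝ) ^ (-(n : ℤ)) = (2⁻¹ : ℝ) ^ n := by
  rw [inv_pow, ← zpow_natCast (2:ℝ) n, ← zpow_neg]

lemma kfTerm_abs_le (x : Cant) (j : ℕ) : |kfTerm x j| ≤ (2⁻¹:ℝ) ^ (j+1) := by
  rw [← two_zpow_eq]
  unfold kfTerm
  split
  · rw [abs_mul, abs_pow, abs_neg, abs_one, one_pow, one_mul, abs_of_pos (by positivity)]
  · rw [abs_zero]; positivity

lemma summable_geo_half : Summable (fun j : ℕ => (2⁻¹:ℝ) ^ j) :=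
  summable_geometric_of_lt_one (by norm_num) (by norm_num)

lemma summable_bound (n : ℕ) : Summable (fun j : ℕ => (2⁻¹:ℝ) ^ (j + n)) := by
  refine (summable_geo_half.mul_left ((2⁻¹:ℝ) ^ n)).congr (fun j => ?_)
  rw [← pow_add]
  congr 1
  omega

lemma summable_kfTerm (x : Cant) : Summable (kfTerm x) := by
  refine Summable.of_norm_bounded ((summable_bound 1)) (fun j => ?_)
  simpa [Real.norm_eq_abs] using kfTerm_abs_le x j

lemma tsum_bound_tail (n : ℕ) : ∑' j : ℕ, (2⁻¹:ℝ) ^ (j + n + 1) = (2:ℝ) ^ (-(n:ℤ)) := by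
  have hcg : ∀ j:ℕ, (2⁻¹:ℝ)^(j+n+1) = (2⁻¹:ℝ)^(n+1) * (2⁻¹:ℝ)^j := by
    intro j
    rw [← pow_add]
    congr 1
    omega
  rw [tsum_congr hcg, tsum_mul_left, tsum_geometric_of_lt_one (by norm_num) (by norm_num),
    zpow_neg_natCast_eq, show ((1:ℝ) - 2⁻¹)⁻¹ = 2 from by norm_num, pow_succ]
  ring

lemma Vd_agree_mem {d y : Cant} (hy : y ∈ Vd d) {i : ℕ} (hi : i ≤ Nd d) :
    (i ∈ ksupp y ↔ i ∈ ksupp d) := by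
  rcases Nat.eq_zero_or_pos i with h0 | h0
  · subst h0
    constructor <;> intro hh <;> exact absurd (ksupp_pos hh) (by omega)
  · lift i to ℕ+ using h0
    rw [mem_ksupp, mem_ksupp, hy i hi]

lemma Vd_supset {d y : Cant} (hd : (ksupp d).Finite) (hy : y ∈ Vd d) :
    ksupp d ⊆ ksupp y :=
  fun _ hi => (Vd_agree_mem hy (le_Nd hd hi)).mpr hi

lemma Vd_card {d y : Cant} (hd : (ksupp d).Finite) (hy : y ∈ Vd d) :
    (ksupp y).Infinite ∨ (ksupp d).ncard ≤ (ksupp y).ncard := by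
  rcases (ksupp y).finite_or_infinite with hf | hf
  · exact Or.inr (Set.ncard_le_ncard (Vd_supset hd hy) hf)
  · exact Or.inl hf

lemma card_toFinset_eq {s : Set ℕ} (hf : (setOf (· ∈ s)).Finite) :
    hf.toFinset.card = s.ncard := by
  rw [← Set.ncard_eq_toFinset_card _ hf]; rfl

lemma nth_agree {d y : Cant} (hd : (ksupp d).Finite) (hy : y ∈ Vd d) {j : ℕ}
    (hj : j < (ksupp d).ncard) :
    Nat.nth (· ∈ ksupp y) j = Nat.nth (· ∈ ksupp d) j := by
  have hdf : (setOf (· ∈ ksupp d)).Finite := by exact hd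
  have hmd : Nat.nth (· ∈ ksupp d) j ∈ ksupp d :=
    Nat.nth_mem_of_lt_card hdf (lt_of_lt_of_eq hj (card_toFinset_eq _).symm)
  set m := Nat.nth (· ∈ ksupp d) j with hm
  have hmN : m ≤ Nd d := le_Nd hd hmd
  have hmy : m ∈ ksupp y := (Vd_agree_mem hy hmN).mpr hmd
  have hcount : Nat.count (· ∈ ksupp y) m = Nat.count (· ∈ ksupp d) m := by
    rw [Nat.count_eq_card_filter_range, Nat.count_eq_card_filter_range]
    congr 1
    apply Finset.filter_congr
    intro i hi
    simp only [Finset.mem_range] at hi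
    exact Vd_agree_mem hy (by omega)
  have hcd : Nat.count (· ∈ ksupp d) m = j :=
    Nat.count_nth (fun hf => lt_of_lt_of_eq hj (card_toFinset_eq hf).symm)
  have hnc := Nat.nth_count (p := (· ∈ ksupp y)) hmy
  rw [hcount, hcd] at hnc
  exact hnc

lemma kf_close {d y : Cant} (hd : (ksupp d).Finite) (hy : y ∈ Vd d) :
    |kf y - kf d| ≤ (2:ℝ) ^ (-((ksupp d).ncard : ℤ)) := by
  set n := (ksupp d).ncard with hn
  have hcard := Vd_card hd hy
  have hsy := summable_kfTerm y
  have h1 : kf y = ∑ j ∈ Finset.range n, kfTerm y j + ∑' j, kfTerm y (j + n) := by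
    rw [kf_eq_tsum]
    exact (Summable.sum_add_tsum_nat_add n hsy).symm
  have h2 : kf d = ∑ j ∈ Finset.range n, kfTerm d j := by
    rw [kf_eq_tsum]
    apply tsum_eq_sum
    intro j hj
    rw [Finset.mem_range, not_lt] at hj
    unfold kfTerm
    rw [if_neg]
    rintro (hinf | hlt)
    · exact hinf hd
    · omega
  have hterm : ∀ j ∈ Finset.range n, kfTerm y j = kfTerm d j := by
    intro j hj
    rw [Finset.mem_range] at hj
    have hcy : (ksupp y).Infinite ∨ j < (ksupp y).ncard := by
      rcases hcard with hinf | hle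
      · exact Or.inl hinf
      · exact Or.inr (by omega)
    unfold kfTerm
    rw [if_pos hcy, if_pos (Or.inr hj), nth_agree hd hy hj]
  have hs2 : Summable (fun j : ℕ => (2⁻¹:ℝ) ^ (j + n + 1)) :=
    (summable_bound (n+1)).congr (fun j => rfl)
  have hb : ∀ j:ℕ, ‖kfTerm y (j+n)‖ ≤ (2⁻¹:ℝ)^(j+n+1) := fun j => by
    simpa [Real.norm_eq_abs] using kfTerm_abs_le y (j+n)
  have hs1 : Summable (fun j : ℕ => ‖kfTerm y (j+n)‖) :=
    Summable.of_nonneg_of_le (fun j => norm_nonneg _) hb hs2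
  have htail : |∑' j, kfTerm y (j + n)| ≤ (2:ℝ)^(-(n:ℤ)) := by
    calc |∑' j, kfTerm y (j + n)| ≤ ∑' j, ‖kfTerm y (j+n)‖ := by
          simpa [Real.norm_eq_abs] using norm_tsum_le_tsum_norm hs1
    _ ≤ ∑' j, (2⁻¹:ℝ)^(j+n+1) := Summable.tsum_le_tsum hb hs1 hs2
    _ = (2:ℝ)^(-(n:ℤ)) := tsum_bound_tail n
  rw [h1, h2, Finset.sum_congr rfl hterm, add_sub_cancel_left]
  exact htail

end KF


section Trunc

/-- Truncation of `x` to its first `n` support elements. -/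
noncomputable def truncC (x : Cant) (n : ℕ) : Cant :=
  fun i => if ∃ j < n, Nat.nth (· ∈ ksupp x) j = (i:ℕ) then true else false

lemma ksupp_truncC {x : Cant} (hx : (ksupp x).Infinite) (n : ℕ) :
    ksupp (truncC x n) = Nat.nth (· ∈ ksupp x) '' (Set.Iio n) := by
  have hxs : (setOf (· ∈ ksupp x)).Infinite := by exact hx
  ext i
  rcases Nat.eq_zero_or_pos i with h0 | h0
  · subst h0
    constructor
    · intro hh
      exact absurd (ksupp_pos hh) (by omega)
    · rintro ⟨j, -, hj⟩
      have hmem := Nat.nth_mem_of_infinite hxs j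
      rw [hj] at hmem
      exact absurd (ksupp_pos hmem) (by omega)
  · lift i to ℕ+ using h0
    rw [mem_ksupp]
    unfold truncC
    by_cases hcond : ∃ j < n, Nat.nth (· ∈ ksupp x) j = (i:ℕ)
    · rw [if_pos hcond]
      simp only [Set.mem_image, Set.mem_Iio, true_iff]
      obtain ⟨j, hj, hji⟩ := hcond
      exact ⟨j, hj, hji⟩
    · rw [if_neg hcond]
      simp only [Set.mem_image, Set.mem_Iio]
      constructor
      · intro hh
        exact absurd hh (by simp)
      · rintro ⟨j, hj, hji⟩
        exact absurd ⟨j, hj, hji⟩ hcond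

lemma truncC_finite {x : Cant} (hx : (ksupp x).Infinite) (n : ℕ) :
    (ksupp (truncC x n)).Finite := by
  rw [ksupp_truncC hx]
  exact (Set.finite_Iio n).image _

lemma truncC_ncard {x : Cant} (hx : (ksupp x).Infinite) (n : ℕ) :
    (ksupp (truncC x n)).ncard = n := by
  have hxs : (setOf (· ∈ ksupp x)).Infinite := by exact hx
  rw [ksupp_truncC hx, Set.ncard_image_of_injOn ((Nat.nth_injective hxs).injOn),
    ← Finset.coe_range, Set.ncard_coe_finset, Finset.card_range]

lemma Nd_truncC {x : Cant} (hx : (ksupp x).Infinite) {n : ℕ} (hn : 1 ≤ n) :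
    Nd (truncC x n) = Nat.nth (· ∈ ksupp x) (n-1) := by
  have hxs : (setOf (· ∈ ksupp x)).Infinite := by exact hx
  have hmem : Nat.nth (· ∈ ksupp x) (n-1) ∈ Nat.nth (· ∈ ksupp x) '' (Set.Iio n) :=
    ⟨n-1, by simp only [Set.mem_Iio]; omega, rfl⟩
  rw [Nd, ksupp_truncC hx]
  apply le_antisymm
  · apply csSup_le ⟨_, hmem⟩
    rintro y ⟨j, hj, rfl⟩
    simp only [Set.mem_Iio] at hj
    exact Nat.nth_monotone hxs (by omega)
  · exact le_csSup ((Set.finite_Iio n).image _).bddAbove hmem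

lemma mem_Vd_truncC {x : Cant} (hx : (ksupp x).Infinite) {n : ℕ} (hn : 1 ≤ n) :
    x ∈ Vd (truncC x n) := by
  have hxs : (setOf (· ∈ ksupp x)).Infinite := by exact hx
  intro i hi
  rw [Nd_truncC hx hn] at hi
  by_cases hxi : x i = true
  · have hmem : (i:ℕ) ∈ ksupp x := mem_ksupp.mpr hxi
    have hcnt : Nat.count (· ∈ ksupp x) (i:ℕ) ≤ n - 1 := by
      have hmono := Nat.count_monotone (· ∈ ksupp x) hi
      rwa [Nat.count_nth (fun hf => absurd hf hxs)] at hmono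
    have hnth : Nat.nth (· ∈ ksupp x) (Nat.count (· ∈ ksupp x) (i:ℕ)) = (i:ℕ) :=
      Nat.nth_count hmem
    rw [hxi]
    unfold truncC
    rw [if_pos ⟨_, by omega, hnth⟩]
  · have hxi' : x i = false := by
      revert hxi
      cases x i <;> simp
    rw [hxi']
    unfold truncC
    rw [if_neg]
    rintro ⟨j, hj, hji⟩
    apply hxi
    have hmem := Nat.nth_mem_of_infinite hxs j
    rw [hji] at hmem
    exact mem_ksupp.mp hmem

end Trunc

end Aux

/-- Let `h : C → K` be a homeomorphism with `h(d) = σ(d)` and `h[V_d] = K ∩ W(d)` for all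
`d ∈ D`, and let `f` be Kuratowski's function.  If `g : K⁺ → ℝ` satisfies
`g(z) = f(h⁻¹(z))` on `K` and `g ≡ f(d)` on each `F(d)`, then `g` is continuous (as a
function on the subspace `K⁺`) at every point of `K⁺ \ σ[D]`; in particular it is
continuous at all points of `K \ σ[D]` and locally constant on `K⁺ \ K`. -/



theorem extended_kf_continuous_off_sigmaD (σ : Cant → Plane) (ℓ : Cant → ℕ)
    (hc : CantorConds σ ℓ) (h : Cant ≃ₜ (Kset σ ℓ))
    (hσ : ∀ d : Cant, (ksupp d).Finite → (h d : Plane) = σ d)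
    (hV : ∀ d : Cant, (ksupp d).Finite →
      Subtype.val '' (h '' Vd d) = Kset σ ℓ ∩ Wb σ ℓ d)
    (g : Plane → ℝ)
    (hgK : ∀ z : Plane, ∀ hz : z ∈ Kset σ ℓ, g z = kf (h.symm ⟨z, hz⟩))
    (hgF : ∀ d : Cant, (ksupp d).Finite → ∀ z ∈ Fd σ ℓ d, g z = kf d) :
    (∀ z ∈ Kplus σ ℓ \ σ '' {d : Cant | (ksupp d).Finite},
        ContinuousWithinAt g (Kplus σ ℓ) z) ∧
      ∀ z ∈ Kplus σ ℓ \ Kset σ ℓ, ∃ ε > (0 : ℝ),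
        ∀ w ∈ Kplus σ ℓ, dist w z < ε → g w = g z := by
  have hloc := g_locally_const hc h hσ g hgF
  refine ⟨?_, hloc⟩
  rintro z ⟨hzP, hzD⟩
  by_cases hzK : z ∈ Kset σ ℓ
  case neg =>
    obtain ⟨ε, hε, hconst⟩ := hloc z ⟨hzP, hzK⟩
    have hev : g =ᶠ[𝓝[Kplus σ ℓ] z] (fun _ => g z) := by
      show {w | g w = g z} ∈ 𝓝[Kplus σ ℓ] z
      apply mem_nhdsWithin.mpr
      refine ⟨Metric.ball z ε, Metric.isOpen_ball, Metric.mem_ball_self hε, ?_⟩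
      rintro w ⟨hw1, hw2⟩
      exact hconst w hw2 (Metric.mem_ball.mp hw1)
    exact Filter.Tendsto.congr' hev.symm tendsto_const_nhds
  case pos =>
  have hhx : ((h (h.symm ⟨z, hzK⟩) : Kset σ ℓ) : Plane) = z := by
    rw [Homeomorph.apply_symm_apply]
  set x := h.symm ⟨z, hzK⟩ with hxdef
  have hxinf : (ksupp x).Infinite := by
    by_contra hfin
    rw [Set.not_infinite] at hfin
    exact hzD ⟨x, hfin, by rw [← hσ x hfin, hhx]⟩
  have hgzval : g z = kf x := hgK z hzK
  show Filter.Tendsto g (𝓝[Kplus σ ℓ] z) (𝓝 (g z))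
  rw [Metric.tendsto_nhds]
  intro ε hε
  obtain ⟨m, hm⟩ := exists_pow_lt_of_lt_one (show (0:ℝ) < ε/2 by linarith)
    (show (2⁻¹:ℝ) < 1 by norm_num)
  have hb2 : (2:ℝ)^(-((m+1:ℕ):ℤ)) < ε/2 := by
    calc (2:ℝ)^(-((m+1:ℕ):ℤ)) ≤ (2:ℝ)^(-(m:ℤ)) :=
          zpow_le_zpow_right₀ one_le_two (by omega)
    _ = (2⁻¹:ℝ)^m := zpow_neg_natCast_eq m
    _ < ε/2 := hm
  obtain ⟨d, hd, hdn, hxVd⟩ : ∃ d, (ksupp d).Finite ∧ (ksupp d).ncard = m+1 ∧ x ∈ Vd d :=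
    ⟨truncC x (m+1), truncC_finite hxinf (m+1), truncC_ncard hxinf (m+1),
      mem_Vd_truncC hxinf (by omega)⟩
  have hzW : z ∈ Wb σ ℓ d := by
    have hmem : z ∈ Subtype.val '' (h '' Vd d) := ⟨h x, Set.mem_image_of_mem h hxVd, hhx⟩
    rw [hV d hd] at hmem
    exact hmem.2
  have hdx : |kf d - kf x| ≤ (2:ℝ)^(-((m+1:ℕ):ℤ)) := by
    have hcl := kf_close hd hxVd
    rw [abs_sub_comm, hdn] at hcl
    exact hcl
  rw [Filter.eventually_iff]
  apply mem_nhdsWithin.mpr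
  refine ⟨Wb σ ℓ d, Metric.isOpen_ball, hzW, ?_⟩
  rintro w ⟨hwW, hwP⟩
  show dist (g w) (g z) < ε
  rw [Real.dist_eq, hgzval]
  by_cases hwK : w ∈ Kset σ ℓ
  · obtain ⟨yk, hykV, hykw⟩ : ∃ y, y ∈ Vd d ∧ ((h y : Kset σ ℓ) : Plane) = w := by
      have hmem : w ∈ Subtype.val '' (h '' Vd d) := by
        rw [hV d hd]
        exact ⟨hwK, hwW⟩
      obtain ⟨w', ⟨y, hyV, rfl⟩, hw'⟩ := hmem
      exact ⟨y, hyV, hw'⟩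
    have hsymm : h.symm ⟨w, hwK⟩ = yk := by
      have : h yk = ⟨w, hwK⟩ := Subtype.ext hykw
      rw [← this, Homeomorph.symm_apply_apply]
    have hgw : g w = kf yk := by rw [hgK w hwK, hsymm]
    have h1 : |kf yk - kf d| ≤ (2:ℝ)^(-((m+1:ℕ):ℤ)) := by
      have hcl := kf_close hd hykV
      rwa [hdn] at hcl
    rw [hgw]
    calc |kf yk - kf x| ≤ |kf yk - kf d| + |kf d - kf x| := abs_sub_le _ _ _
    _ < ε := by linarith
  · obtain ⟨d', hd', hwF⟩ : ∃ d', (ksupp d').Finite ∧ w ∈ Fd σ ℓ d' := by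
      rcases hwP with hK | hF
      · exact absurd hK hwK
      · simpa using hF
    rcases Fd_cases hc hd hd' ⟨w, hwF, hwW⟩ with rfl | ⟨hVd', hcard', -⟩
    · rw [hgF d' hd' w hwF]
      have habs : |kf d' - kf x| ≤ (2:ℝ)^(-((m+1:ℕ):ℤ)) := hdx
      have hpos : (0:ℝ) < (2:ℝ)^(-((m+1:ℕ):ℤ)) := by positivity
      linarith
    · rw [hgF d' hd' w hwF]
      have h1 : |kf d' - kf d| ≤ (2:ℝ)^(-((m+1:ℕ):ℤ)) := by
        have hcl := kf_close hd hVd'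
        rwa [hdn] at hcl
      calc |kf d' - kf x| ≤ |kf d' - kf d| + |kf d - kf x| := abs_sub_le _ _ _
      _ < ε := by linarith
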